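/- The series f satisfies the q-difference equation q (1 − x) f(x) = (q + c + a x² q² + d x² q²) f(xq) − (1 + xq)(c − a d x² q³) f(xq²) in R[[x]], together with f(0) = 1 and f'(0) = (1 − q)^{−1} (i.e. the coefficient of x in f is (1 − q)^{−1}). -/

import Mathlib

open Finset PowerSeries

namespace Primc

/-- Colours: `0 = a`, `1 = b`, `2 = c`, `3 = d`. -/
abbrev Colour := Fin 4

/-- A coloured part `k_z`: an underlying integer `k` together with its colour `z`. -/
abbrev CPart := ℕ × Colour

/-- The matrix `D` of minimal differences, with rows and columns indexed by the colours
`a, b, c, d` in this order. -/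
def Dmat : Colour → Colour → ℕ := ![![2,1,2,2], ![1,0,1,1], ![0,1,0,2], ![0,1,0,2]]

/-- The position of a coloured part in the total order
`1_a < 1_b < 1_c < 1_d < 2_a < 2_b < 2_c < 2_d < ⋯`. -/
def pos (p : CPart) : ℕ := 4 * p.1 + (p.2 : ℕ)

/-- A Primc partition: a finite sequence of coloured positive integers, non-increasing in the
above total order, in which consecutive parts `λ_i, λ_{i+1}` of colours `x, y` satisfy
`λ_i − λ_{i+1} ≥ D(x,y)`. -/
def IsPrimc (l : List CPart) : Prop :=
  (∀ p ∈ l, 1 ≤ p.1) ∧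
  l.Chain' fun p r => pos r ≤ pos p ∧ r.1 + Dmat p.2 r.2 ≤ p.1

/-- The weight of a coloured partition: the sum of the underlying integers of its parts. -/
def wt (l : List CPart) : ℕ := (l.map Prod.fst).sum

/-- The number of parts of colour `z`. -/
def nc (l : List CPart) (z : Colour) : ℕ := l.countP fun p => p.2 == z

/-- `R₀ = ℤ[a,c,d]`, with `a = X 0`, `c = X 1`, `d = X 2`. -/
abbrev R0 := MvPolynomial (Fin 3) ℤ

/-- `R = ℤ[a,c,d][[q]]`. -/
abbrev R := PowerSeries R0

/-- The variable `q`. -/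
noncomputable def qq : R := PowerSeries.X

/-- The variable `a`. -/
noncomputable def av : R0 := MvPolynomial.X 0

/-- The variable `c`. -/
noncomputable def cv : R0 := MvPolynomial.X 1

/-- The variable `d`. -/
noncomputable def dv : R0 := MvPolynomial.X 2

/-- The monomial `a^{#(a-parts)} c^{#(c-parts)} d^{#(d-parts)}` attached to a coloured
partition. -/
noncomputable def mono (l : List CPart) : R0 := av ^ nc l 0 * cv ^ nc l 2 * dv ^ nc l 3

/-- The infinite product `∏_{j ≥ 0} f j`, defined coefficientwise: the coefficient of `qⁿ` is
the corresponding coefficient of the partial product `∏_{j ≤ n} f j`.  This agrees with the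
usual (coefficientwise convergent) infinite product whenever the factor `f j` is `≡ 1`
modulo `q^{j+1}`, as is the case for all products appearing here. -/
noncomputable def iprod (f : ℕ → R) : R :=
  PowerSeries.mk fun n => PowerSeries.coeff (R := R0) n (∏ j ∈ Finset.range (n + 1), f j)

/-- The largest part of a Primc partition (its parts being written in non-increasing order),
with the convention that the empty partition has largest part `0_b`. -/
def top (l : List CPart) : CPart := l.headD (0, 1)

/-- `G_{k_x} ∈ R`: the sum of `q^{|λ|} a^{#(a-parts)} c^{#(c-parts)} d^{#(d-parts)}` over all
Primc partitions `λ` whose largest part is at most `k_x` in the colour order. -/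
noncomputable def G (k : ℕ) (x : Colour) : R :=
  PowerSeries.mk fun n =>
    ∑ᶠ lam : {l : List CPart // IsPrimc l ∧ wt l = n ∧ pos (top l) ≤ pos (k, x)}, mono lam.1

/-- `E_{k_x} ∈ R`: the sum of `q^{|λ|} a^{#(a-parts)} c^{#(c-parts)} d^{#(d-parts)}` over all
Primc partitions `λ` whose largest part is exactly `k_x` (so `E_{0_b} = 1`, the empty
partition having largest part `0_b` by convention). -/
noncomputable def E (k : ℕ) (x : Colour) : R :=
  PowerSeries.mk fun n =>
    ∑ᶠ lam : {l : List CPart // IsPrimc l ∧ wt l = n ∧ top l = (k, x)}, mono lam.1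

/-- `H_k = G_{k_d} (1 − q^{k+1})⁻¹ ∈ R` for `k ≥ 0`. -/
noncomputable def H (k : ℕ) : R := G k 3 * Ring.inverse (1 - qq ^ (k + 1))

/-- `f(x) = ∑_{k ≥ 0} H_{k−1} x^k ∈ R[[x]]`, with the convention `H_{−1} = 1`. -/
noncomputable def fser : PowerSeries R :=
  PowerSeries.mk fun k => if k = 0 then 1 else H (k - 1)


/-! ### Infrastructure -/

lemma isPrimc_nil : IsPrimc [] := ⟨by simp, List.isChain_nil⟩

lemma wt_cons (p : CPart) (l : List CPart) : wt (p :: l) = p.1 + wt l := by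
  simp [wt]

lemma part_le_wt {l : List CPart} {p : CPart} (hp : p ∈ l) : p.1 ≤ wt l :=
  List.single_le_sum (fun x _ => Nat.zero_le x) _ (List.mem_map_of_mem (f := Prod.fst) hp)

lemma length_le_wt {l : List CPart} (h : ∀ p ∈ l, 1 ≤ p.1) : l.length ≤ wt l := by
  have := List.length_le_sum_of_one_le (l.map Prod.fst) (by simpa using h)
  simpa [wt] using this

/-- The set of Primc partitions of weight `n` satisfying `P`. -/
def SSet (n : ℕ) (P : List CPart → Prop) : Set (List CPart) :=
  {l | IsPrimc l ∧ wt l = n ∧ P l}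

lemma SSet_finite (n : ℕ) (P : List CPart → Prop) : (SSet n P).Finite := by
  classical
  set f : List CPart → List (Fin (n+1) × Colour) :=
    fun l => l.map (fun p => (⟨min p.1 n, by omega⟩, p.2)) with hf
  have hmem : ∀ l ∈ SSet n P, ∀ p ∈ l, p.1 ≤ n := by
    rintro l ⟨hl, hw, _⟩ p hp
    exact hw ▸ part_le_wt hp
  have hback : ∀ l ∈ SSet n P, (f l).map (fun q => ((q.1 : ℕ), q.2)) = l := by
    intro l hl
    rw [hf, List.map_map]
    conv_rhs => rw [← List.map_id l]
    refine List.map_congr_left (fun p hp => ?_)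
    have := hmem l hl p hp
    simp [Nat.min_eq_left this]
  have hinj : Set.InjOn f (SSet n P) := by
    intro l1 h1 l2 h2 hfe
    rw [← hback l1 h1, ← hback l2 h2, hfe]
  have himg : (f '' SSet n P).Finite := by
    refine (List.finite_length_le _ n).subset ?_
    rintro _ ⟨l, hl, rfl⟩
    have hlen : l.length ≤ n := by
      obtain ⟨hl1, hw, _⟩ := hl
      simpa [hw] using length_le_wt hl1.1
    simpa [hf] using hlen
  exact Set.Finite.of_finite_image himg hinj

/-- Generating series of Primc partitions satisfying `P`. -/
noncomputable def S (P : List CPart → Prop) : R :=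
  PowerSeries.mk fun n => ∑ᶠ l ∈ SSet n P, mono l

lemma coeff_S (P : List CPart → Prop) (n : ℕ) :
    PowerSeries.coeff (R := R0) n (S P) = ∑ᶠ l ∈ SSet n P, mono l := by
  simp [S]

lemma G_eq (k : ℕ) (x : Colour) : G k x = S (fun l => pos (top l) ≤ pos (k, x)) := by
  refine PowerSeries.ext fun n => ?_
  rw [coeff_S, G]
  simp only [PowerSeries.coeff_mk]
  exact finsum_subtype_eq_finsum_cond
    (fun l => IsPrimc l ∧ wt l = n ∧ pos (top l) ≤ pos (k, x)) (f := mono)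

lemma E_eq (k : ℕ) (x : Colour) : E k x = S (fun l => top l = (k, x)) := by
  refine PowerSeries.ext fun n => ?_
  rw [coeff_S, E]
  simp only [PowerSeries.coeff_mk]
  exact finsum_subtype_eq_finsum_cond
    (fun l => IsPrimc l ∧ wt l = n ∧ top l = (k, x)) (f := mono)

lemma S_congr {P Q : List CPart → Prop} (h : ∀ l, IsPrimc l → (P l ↔ Q l)) : S P = S Q := by
  refine PowerSeries.ext fun n => ?_
  rw [coeff_S, coeff_S]
  have hs : SSet n P = SSet n Q := by
    ext l
    exact and_congr_right fun hl => and_congr_right fun _ => h l hl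
  rw [hs]

lemma S_add {P Q : List CPart → Prop} (h : ∀ l, IsPrimc l → ¬(P l ∧ Q l)) :
    S (fun l => P l ∨ Q l) = S P + S Q := by
  refine PowerSeries.ext fun n => ?_
  rw [map_add, coeff_S, coeff_S, coeff_S]
  have hU : SSet n (fun l => P l ∨ Q l) = SSet n P ∪ SSet n Q := by
    ext l
    simp only [SSet, Set.mem_setOf_eq, Set.mem_union]
    tauto
  rw [hU]
  have hd : Disjoint (SSet n P) (SSet n Q) := by
    rw [Set.disjoint_left]
    rintro l ⟨hl, _, hP⟩ ⟨_, _, hQ⟩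
    exact h l hl ⟨hP, hQ⟩
  exact finsum_mem_union hd (SSet_finite n P) (SSet_finite n Q)

lemma S_nil : S (fun l => l = []) = 1 := by
  refine PowerSeries.ext fun n => ?_
  rw [coeff_S]
  rcases n with _ | n
  · have : SSet 0 (fun l => l = []) = {[]} := by
      ext l
      simp only [SSet, Set.mem_setOf_eq, Set.mem_singleton_iff]
      constructor
      · rintro ⟨_, _, rfl⟩; rfl
      · rintro rfl; exact ⟨isPrimc_nil, rfl, rfl⟩
    rw [this, finsum_mem_singleton]
    simp [mono, nc, av, cv, dv]
  · have : SSet (n+1) (fun l => l = []) = ∅ := by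
      ext l
      simp only [SSet, Set.mem_setOf_eq, Set.mem_empty_iff_false, iff_false, not_and]
      rintro _ hw rfl
      simp [wt] at hw
    rw [this, finsum_mem_empty]
    simp

/-- The colour-tracking variable attached to each colour (`b` is untracked). -/
noncomputable def cvar : Colour → R0 := ![av, 1, cv, dv]

lemma mono_cons (k : ℕ) (x : Colour) (l : List CPart) :
    mono ((k, x) :: l) = cvar x * mono l := by
  fin_cases x <;>
    simp [mono, nc, cvar, List.countP_cons, av, cv, dv] <;> ring

lemma isPrimc_cons {p : CPart} {l : List CPart} :
    IsPrimc (p :: l) ↔ 1 ≤ p.1 ∧ IsPrimc l ∧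
      (l = [] ∨ (pos (top l) ≤ pos p ∧ (top l).1 + Dmat p.2 (top l).2 ≤ p.1)) := by
  rcases l with _ | ⟨r, t⟩
  · simp [IsPrimc, List.Chain', List.isChain_singleton]
  · constructor
    · rintro ⟨h1, h2⟩
      rw [List.Chain', List.isChain_cons_cons] at h2
      exact ⟨h1 _ (by simp), ⟨fun q hq => h1 q (by simp [hq]), h2.2⟩,
        Or.inr ⟨h2.1.1, h2.1.2⟩⟩
    · rintro ⟨h1, ⟨h2, h3⟩, h4⟩
      rcases h4 with h4 | h4
      · exact absurd h4 (by simp)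
      · refine ⟨?_, List.isChain_cons_cons.mpr ⟨⟨h4.1, h4.2⟩, h3⟩⟩
        intro q hq
        rcases List.mem_cons.mp hq with rfl | hq
        · exact h1
        · exact h2 q hq

lemma wt_pos_of_top {l : List CPart} (h : IsPrimc l) {k : ℕ} {x : Colour}
    (ht : top l = (k, x)) (hk : 1 ≤ k) : k ≤ wt l := by
  rcases l with _ | ⟨r, t⟩
  · simp [top] at ht
    omega
  · simp only [top, List.headD] at ht
    subst ht
    simpa [wt_cons] using Nat.le_add_right k (wt t)

lemma E_cons (k : ℕ) (hk : 1 ≤ k) (x : Colour) :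
    E k x = PowerSeries.C (R := R0) (cvar x) * qq ^ k * S (fun l => IsPrimc ((k, x) :: l)) := by
  rw [E_eq]
  refine PowerSeries.ext fun n => ?_
  rw [mul_assoc, PowerSeries.coeff_C_mul]
  have hq : (qq : R) ^ k = PowerSeries.X ^ k := rfl
  rw [hq, PowerSeries.coeff_X_pow_mul']
  rw [coeff_S]
  by_cases hn : k ≤ n
  · rw [if_pos hn, coeff_S]
    have hbij : Set.BijOn (fun l => (k, x) :: l)
        (SSet (n - k) (fun l => IsPrimc ((k, x) :: l)))
        (SSet n (fun l => top l = (k, x))) := by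
      refine ⟨?_, ?_, ?_⟩
      · rintro l ⟨hl, hw, hc⟩
        exact ⟨hc, by simp [wt_cons, hw]; omega, rfl⟩
      · intro l1 _ l2 _ h
        simpa using h
      · rintro l ⟨hl, hw, ht⟩
        rcases l with _ | ⟨p, t⟩
        · exfalso
          simp only [top, List.headD] at ht
          rw [Prod.ext_iff] at ht
          simp at ht
          omega
        · have hp : p = (k, x) := ht
          subst hp
          refine ⟨t, ⟨(isPrimc_cons.mp hl).2.1, ?_, hl⟩, rfl⟩
          rw [wt_cons] at hw
          omega
    have key := finsum_mem_eq_of_bijOn (M := R0) (fun l => (k, x) :: l) hbij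
      (f := fun l => cvar x * mono l) (g := mono)
      (fun l _ => (mono_cons k x l).symm)
    rw [← key, finsum_mem_eq_finite_toFinset_sum _ (SSet_finite (n - k) _),
      ← Finset.mul_sum, ← finsum_mem_eq_finite_toFinset_sum _ (SSet_finite (n - k) _)]
  · rw [if_neg hn]
    have : SSet n (fun l => top l = (k, x)) = ∅ := by
      ext l
      simp only [SSet, Set.mem_setOf_eq, Set.mem_empty_iff_false, iff_false, not_and]
      rintro hl hw ht
      exact hn (hw ▸ wt_pos_of_top hl ht hk)
    rw [this, finsum_mem_empty, mul_zero]

lemma one_le_top {l : List CPart} (hl : IsPrimc l) (h : l ≠ []) : 1 ≤ (top l).1 := by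
  rcases l with _ | ⟨p, t⟩
  · exact absurd rfl h
  · exact hl.1 p (by simp [top])

lemma top_nil : top ([] : List CPart) = (0, 1) := rfl

lemma cval1 : ((1 : Colour) : ℕ) = 1 := rfl
lemma cval2 : ((2 : Colour) : ℕ) = 2 := rfl
lemma cval3 : ((3 : Colour) : ℕ) = 3 := rfl

lemma ch3 (k : ℕ) {l : List CPart} (hl : IsPrimc l) :
    IsPrimc ((k+1, (3 : Colour)) :: l) ↔
      (pos (top l) ≤ pos (k, 2) ∨ top l = (k+1, 0) ∨ top l = (k+1, 2)) := by
  rw [isPrimc_cons]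
  simp only [hl, true_and, and_iff_right (by omega : 1 ≤ k+1)]
  rcases l with _ | ⟨p, t⟩
  · simp [top_nil, pos, Prod.ext_iff, cval1, cval2, cval3] <;> omega
  · have h1 : 1 ≤ p.1 := hl.1 p (by simp)
    have ht : top (p :: t) = p := rfl
    rw [ht]
    obtain ⟨t1, y⟩ := p
    simp only [List.cons_ne_nil, false_or] at *
    fin_cases y <;>
      (simp [pos, Dmat, Prod.ext_iff, Matrix.vecHead, Matrix.vecTail] <;> omega)

lemma ch2 (k : ℕ) {l : List CPart} (hl : IsPrimc l) :
    IsPrimc ((k+1, (2 : Colour)) :: l) ↔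
      (pos (top l) ≤ pos (k, 2) ∨ top l = (k+1, 0) ∨ top l = (k+1, 2)) := by
  rw [isPrimc_cons]
  simp only [hl, true_and, and_iff_right (by omega : 1 ≤ k+1)]
  rcases l with _ | ⟨p, t⟩
  · simp [top_nil, pos, Prod.ext_iff, cval1, cval2, cval3] <;> omega
  · have h1 : 1 ≤ p.1 := hl.1 p (by simp)
    have ht : top (p :: t) = p := rfl
    rw [ht]
    obtain ⟨t1, y⟩ := p
    simp only [List.cons_ne_nil, false_or] at *
    fin_cases y <;>
      (simp [pos, Dmat, Prod.ext_iff, Matrix.vecHead, Matrix.vecTail] <;> omega)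

lemma ch1 (k : ℕ) {l : List CPart} (hl : IsPrimc l) :
    IsPrimc ((k+1, (1 : Colour)) :: l) ↔
      (pos (top l) ≤ pos (k, 3) ∨ top l = (k+1, 1)) := by
  rw [isPrimc_cons]
  simp only [hl, true_and, and_iff_right (by omega : 1 ≤ k+1)]
  rcases l with _ | ⟨p, t⟩
  · simp [top_nil, pos, Prod.ext_iff, cval1, cval2, cval3] <;> omega
  · have h1 : 1 ≤ p.1 := hl.1 p (by simp)
    have ht : top (p :: t) = p := rfl
    rw [ht]
    obtain ⟨t1, y⟩ := p
    simp only [List.cons_ne_nil, false_or] at *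
    fin_cases y <;>
      (simp [pos, Dmat, Prod.ext_iff, Matrix.vecHead, Matrix.vecTail] <;> omega)

lemma ch0 (k : ℕ) {l : List CPart} (hl : IsPrimc l) :
    IsPrimc ((k+2, (0 : Colour)) :: l) ↔
      (pos (top l) ≤ pos (k, 3) ∨ top l = (k+1, 1)) := by
  rw [isPrimc_cons]
  simp only [hl, true_and, and_iff_right (by omega : 1 ≤ k+2)]
  rcases l with _ | ⟨p, t⟩
  · simp [top_nil, pos, Prod.ext_iff, cval1, cval2, cval3] <;> omega
  · have h1 : 1 ≤ p.1 := hl.1 p (by simp)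
    have ht : top (p :: t) = p := rfl
    rw [ht]
    obtain ⟨t1, y⟩ := p
    simp only [List.cons_ne_nil, false_or] at *
    fin_cases y <;>
      (simp [pos, Dmat, Prod.ext_iff, Matrix.vecHead, Matrix.vecTail] <;> omega)

lemma ch0b {l : List CPart} (hl : IsPrimc l) :
    IsPrimc ((1, (0 : Colour)) :: l) ↔ l = [] := by
  rw [isPrimc_cons]
  simp only [hl, true_and, and_iff_right (by omega : 1 ≤ 1)]
  rcases l with _ | ⟨p, t⟩
  · simp
  · have h1 : 1 ≤ p.1 := hl.1 p (by simp)
    have ht : top (p :: t) = p := rfl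
    rw [ht]
    obtain ⟨t1, y⟩ := p
    simp only [List.cons_ne_nil, false_or] at *
    fin_cases y <;>
      (simp [pos, Dmat, Prod.ext_iff, Matrix.vecHead, Matrix.vecTail] <;> omega)

lemma chG3 (k : ℕ) {l : List CPart} (hl : IsPrimc l) :
    pos (top l) ≤ pos (k+1, 3) ↔
      (pos (top l) ≤ pos (k, 3) ∨ top l = (k+1, 0) ∨ top l = (k+1, 1) ∨
        top l = (k+1, 2) ∨ top l = (k+1, 3)) := by
  rcases l with _ | ⟨p, t⟩
  · simp [top_nil, pos, Prod.ext_iff, cval1, cval2, cval3] <;> omega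
  · have h1 : 1 ≤ p.1 := hl.1 p (by simp)
    have ht : top (p :: t) = p := rfl
    rw [ht]
    obtain ⟨t1, y⟩ := p
    fin_cases y <;>
      (simp [pos, Prod.ext_iff, Matrix.vecHead, Matrix.vecTail] <;> omega)

lemma chG2 (k : ℕ) {l : List CPart} (hl : IsPrimc l) :
    pos (top l) ≤ pos (k+1, 2) ↔
      (pos (top l) ≤ pos (k, 3) ∨ top l = (k+1, 0) ∨ top l = (k+1, 1) ∨
        top l = (k+1, 2)) := by
  rcases l with _ | ⟨p, t⟩
  · simp [top_nil, pos, Prod.ext_iff, cval1, cval2, cval3] <;> omega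
  · have h1 : 1 ≤ p.1 := hl.1 p (by simp)
    have ht : top (p :: t) = p := rfl
    rw [ht]
    obtain ⟨t1, y⟩ := p
    fin_cases y <;>
      (simp [pos, Prod.ext_iff, Matrix.vecHead, Matrix.vecTail] <;> omega)

lemma chG03 {l : List CPart} (hl : IsPrimc l) :
    pos (top l) ≤ pos (0, 3) ↔ l = [] := by
  rcases l with _ | ⟨p, t⟩
  · simp [top_nil, pos, Prod.ext_iff, cval1, cval2, cval3] <;> omega
  · have h1 : 1 ≤ p.1 := hl.1 p (by simp)
    have ht : top (p :: t) = p := rfl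
    rw [ht]
    simp only [List.cons_ne_nil, iff_false]
    simp [pos]
    omega

lemma chG02 {l : List CPart} (hl : IsPrimc l) :
    pos (top l) ≤ pos (0, 2) ↔ l = [] := by
  rcases l with _ | ⟨p, t⟩
  · simp [top_nil, pos, Prod.ext_iff, cval1, cval2, cval3] <;> omega
  · have h1 : 1 ≤ p.1 := hl.1 p (by simp)
    have ht : top (p :: t) = p := rfl
    rw [ht]
    simp only [List.cons_ne_nil, iff_false]
    simp [pos]
    omega

lemma disjA {m : ℕ} {y2 : Colour} {j : ℕ} {y : Colour} (h : pos (m, y2) < pos (j, y)) :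
    ∀ l, IsPrimc l → ¬(pos (top l) ≤ pos (m, y2) ∧ top l = (j, y)) := by
  rintro l _ ⟨h1, h2⟩
  rw [h2] at h1
  omega

lemma disjB {p1 p2 : CPart} (h : p1 ≠ p2) :
    ∀ l, IsPrimc l → ¬(top l = p1 ∧ top l = p2) := by
  rintro l _ ⟨h1, h2⟩
  exact h (h1 ▸ h2 ▸ rfl)

lemma cG03 : G 0 3 = 1 := by
  rw [G_eq, S_congr (fun l hl => chG03 hl), S_nil]

lemma cG02 : G 0 2 = 1 := by
  rw [G_eq, S_congr (fun l hl => chG02 hl), S_nil]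

lemma cG1 (k : ℕ) :
    G (k+1) 3 = G k 3 + E (k+1) 0 + E (k+1) 1 + E (k+1) 2 + E (k+1) 3 := by
  rw [G_eq (k+1) 3, S_congr (fun l hl => chG3 k hl)]
  rw [S_add (fun l hl hc => by
    rcases hc.2 with h | h | h | h <;>
      exact disjA (by simp [pos, cval1, cval2, cval3] <;> omega) l hl ⟨hc.1, h⟩)]
  rw [S_add (fun l hl hc => by
    rcases hc.2 with h | h | h <;>
      exact disjB (by simp [Prod.ext_iff]) l hl ⟨hc.1, h⟩)]
  rw [S_add (fun l hl hc => by
    rcases hc.2 with h | h <;>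
      exact disjB (by simp [Prod.ext_iff]) l hl ⟨hc.1, h⟩)]
  rw [S_add (disjB (by simp [Prod.ext_iff]))]
  rw [← G_eq, ← E_eq, ← E_eq, ← E_eq, ← E_eq]
  ring

lemma cG2 (k : ℕ) :
    G (k+1) 2 = G k 3 + E (k+1) 0 + E (k+1) 1 + E (k+1) 2 := by
  rw [G_eq (k+1) 2, S_congr (fun l hl => chG2 k hl)]
  rw [S_add (fun l hl hc => by
    rcases hc.2 with h | h | h <;>
      exact disjA (by simp [pos, cval1, cval2, cval3] <;> omega) l hl ⟨hc.1, h⟩)]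
  rw [S_add (fun l hl hc => by
    rcases hc.2 with h | h <;>
      exact disjB (by simp [Prod.ext_iff]) l hl ⟨hc.1, h⟩)]
  rw [S_add (disjB (by simp [Prod.ext_iff]))]
  rw [← G_eq, ← E_eq, ← E_eq, ← E_eq]
  ring

lemma cE2 (k : ℕ) : E (k+1) 1 = qq ^ (k+1) * (G k 3 + E (k+1) 1) := by
  conv_lhs => rw [E_cons (k+1) (by omega) 1]
  rw [ S_congr (fun l hl => ch1 k hl)]
  rw [S_add (disjA (by simp [pos, cval1, cval3] <;> omega))]
  rw [← G_eq, ← E_eq]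
  have : cvar 1 = 1 := rfl
  rw [this, map_one, one_mul]

lemma cE1 (k : ℕ) :
    E (k+2) 0 = PowerSeries.C (R := R0) av * qq ^ (k+2) * (G k 3 + E (k+1) 1) := by
  rw [E_cons (k+2) (by omega) 0, S_congr (fun l hl => ch0 k hl)]
  rw [S_add (disjA (by simp [pos, cval1, cval3] <;> omega))]
  rw [← G_eq, ← E_eq]
  rfl

lemma cE1b : E 1 0 = PowerSeries.C (R := R0) av * qq := by
  rw [E_cons 1 (by omega) 0, S_congr (fun l hl => ch0b hl), S_nil]
  rw [mul_one, pow_one]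
  rfl

lemma cE3 (k : ℕ) :
    E (k+1) 2 = PowerSeries.C (R := R0) cv * qq ^ (k+1) * (G k 2 + E (k+1) 0 + E (k+1) 2) := by
  conv_lhs => rw [E_cons (k+1) (by omega) 2]
  rw [ S_congr (fun l hl => ch2 k hl)]
  rw [S_add (fun l hl hc => by
    rcases hc.2 with h | h <;>
      exact disjA (by simp [pos, cval2] <;> omega) l hl ⟨hc.1, h⟩)]
  rw [S_add (disjB (by simp [Prod.ext_iff]))]
  rw [← G_eq, ← E_eq, ← E_eq]
  have : cvar 2 = cv := rfl
  rw [this, add_assoc]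

lemma cE4 (k : ℕ) :
    E (k+1) 3 = PowerSeries.C (R := R0) dv * qq ^ (k+1) * (G k 2 + E (k+1) 0 + E (k+1) 2) := by
  conv_lhs => rw [E_cons (k+1) (by omega) 3]
  rw [ S_congr (fun l hl => ch3 k hl)]
  rw [S_add (fun l hl hc => by
    rcases hc.2 with h | h <;>
      exact disjA (by simp [pos, cval2] <;> omega) l hl ⟨hc.1, h⟩)]
  rw [S_add (disjB (by simp [Prod.ext_iff]))]
  rw [← G_eq, ← E_eq, ← E_eq]
  have : cvar 3 = dv := rfl
  rw [this, add_assoc]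

lemma unitq (m : ℕ) : IsUnit ((1 : R) - qq ^ (m+1)) := by
  rw [PowerSeries.isUnit_iff_constantCoeff]
  have : PowerSeries.constantCoeff (R := R0) ((1 : R) - qq ^ (m+1)) = 1 := by
    simp [qq]
  rw [this]
  exact isUnit_one

lemma HG (k : ℕ) : (1 - qq ^ (k+1)) * H k = G k 3 := by
  rw [H, ← mul_assoc, mul_comm ((1:R) - qq ^ (k+1)), mul_assoc,
    Ring.mul_inverse_cancel _ (unitq k), mul_one]

lemma Pa (k : ℕ) : G k 3 + E (k+1) 1 = H k := by
  have h1 : (1 - qq ^ (k+1)) * (G k 3 + E (k+1) 1) = (1 - qq ^ (k+1)) * H k := by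
    rw [HG k]
    linear_combination cE2 k
  exact (unitq k).mul_left_cancel h1

lemma Pb (k : ℕ) : E (k+2) 0 = PowerSeries.C (R := R0) av * qq ^ (k+2) * H k := by
  rw [cE1 k, Pa k]

lemma H0q : (1 - qq) * H 0 = 1 := by
  have := HG 0
  rw [pow_one] at this
  rw [this, cG03]

/-- `T_k`: the generating series for the common continuation set of `c`/`d`-topped parts. -/
noncomputable def Tt (k : ℕ) : R := G k 2 + E (k+1) 0 + E (k+1) 2

lemma star (k : ℕ) :
    (PowerSeries.C (R := R0) cv + PowerSeries.C (R := R0) dv) * qq ^ (k+1) * Tt k =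
      G (k+1) 3 - H k - E (k+1) 0 := by
  have hT : Tt k = G k 2 + E (k+1) 0 + E (k+1) 2 := rfl
  linear_combination (-1 : R) * cG1 k - Pa k - cE3 k - cE4 k +
    (PowerSeries.C (R := R0) cv + PowerSeries.C (R := R0) dv) * qq ^ (k+1) * hT

lemma Pe (k : ℕ) :
    G (k+1) 2 = G (k+1) 3 - PowerSeries.C (R := R0) dv * qq ^ (k+1) * Tt k := by
  have hT : Tt k = G k 2 + E (k+1) 0 + E (k+1) 2 := rfl
  linear_combination cG2 k - cG1 k - cE4 k + PowerSeries.C (R := R0) dv * qq ^ (k+1) * hT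

lemma dagger (k : ℕ) :
    (1 - PowerSeries.C (R := R0) cv * qq ^ (k+2)) * Tt (k+1) +
      PowerSeries.C (R := R0) dv * qq ^ (k+1) * Tt k = G (k+1) 3 + E (k+2) 0 := by
  have hT : Tt (k+1) = G (k+1) 2 + E (k+2) 0 + E (k+2) 2 := rfl
  linear_combination (1 - PowerSeries.C (R := R0) cv * qq ^ (k+2)) * hT + cE3 (k+1) + Pe k

lemma IV (k : ℕ) :
    (1 - PowerSeries.C (R := R0) cv * qq ^ (k+2)) * (G (k+2) 3 - H (k+1) - E (k+2) 0) +
      PowerSeries.C (R := R0) dv * qq ^ (k+2) * (G (k+1) 3 - H k - E (k+1) 0) =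
    (PowerSeries.C (R := R0) cv + PowerSeries.C (R := R0) dv) * qq ^ (k+2) * (G (k+1) 3 + E (k+2) 0) := by
  linear_combination (-(1 : R) + PowerSeries.C (R := R0) cv * qq ^ (k+2)) * star (k+1) -
    PowerSeries.C (R := R0) dv * qq ^ (k+2) * star k +
    (PowerSeries.C (R := R0) cv + PowerSeries.C (R := R0) dv) * qq ^ (k+2) * dagger k

lemma Vgen (j : ℕ) :
    (1 - qq ^ (j+4) - PowerSeries.C (R := R0) cv * qq ^ (j+3) +
        PowerSeries.C (R := R0) cv * qq ^ (2*j+7)) * H (j+3) =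
      (1 - PowerSeries.C (R := R0) cv * qq ^ (2*j+6)) * H (j+2) +
      ((PowerSeries.C (R := R0) av + PowerSeries.C (R := R0) dv) * qq ^ (j+3) +
        PowerSeries.C (R := R0) av * PowerSeries.C (R := R0) dv * qq ^ (2*j+6)) * H (j+1) +
      PowerSeries.C (R := R0) av * PowerSeries.C (R := R0) dv * qq ^ (2*j+5) * H j := by
  linear_combination IV (j+1) + (1 - PowerSeries.C (R := R0) cv * qq ^ (j+3)) * HG (j+3) +
    (1 + PowerSeries.C (R := R0) dv * qq ^ (j+3)) * Pb (j+1) -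
    PowerSeries.C (R := R0) cv * qq ^ (j+3) * HG (j+2) +
    PowerSeries.C (R := R0) dv * qq ^ (j+3) * Pb j

lemma V2 :
    (1 - qq ^ 3 - PowerSeries.C (R := R0) cv * qq ^ 2 + PowerSeries.C (R := R0) cv * qq ^ 5) * H 2 =
      (1 - PowerSeries.C (R := R0) cv * qq ^ 4) * H 1 +
      ((PowerSeries.C (R := R0) av + PowerSeries.C (R := R0) dv) * qq ^ 2 +
        PowerSeries.C (R := R0) av * PowerSeries.C (R := R0) dv * qq ^ 4) * H 0 +
      PowerSeries.C (R := R0) av * PowerSeries.C (R := R0) dv * qq ^ 3 := by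
  linear_combination IV 0 + (1 - PowerSeries.C (R := R0) cv * qq ^ 2) * HG 2 +
    (1 + PowerSeries.C (R := R0) dv * qq ^ 2) * Pb 0 -
    PowerSeries.C (R := R0) cv * qq ^ 2 * HG 1 +
    PowerSeries.C (R := R0) dv * qq ^ 2 * cE1b

lemma V1 :
    (1 - qq ^ 2 - PowerSeries.C (R := R0) cv * qq + PowerSeries.C (R := R0) cv * qq ^ 3) * H 1 =
      (1 - PowerSeries.C (R := R0) cv * qq ^ 2) * H 0 +
      ((PowerSeries.C (R := R0) av + PowerSeries.C (R := R0) dv) * qq +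
        PowerSeries.C (R := R0) av * PowerSeries.C (R := R0) dv * qq ^ 2) := by
  have hT0 : Tt 0 = G 0 2 + E 1 0 + E 1 2 := rfl
  have hT : (1 - PowerSeries.C (R := R0) cv * qq) * Tt 0 = 1 + PowerSeries.C (R := R0) av * qq := by
    linear_combination hT0 + cE3 0 + cG02 + cE1b - PowerSeries.C (R := R0) cv * qq * hT0
  have hIV1 : (1 - PowerSeries.C (R := R0) cv * qq) *
      (G 1 3 - H 0 - PowerSeries.C (R := R0) av * qq) =
      (PowerSeries.C (R := R0) cv + PowerSeries.C (R := R0) dv) * qq *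
        (1 + PowerSeries.C (R := R0) av * qq) := by
    linear_combination (-(1 : R) + PowerSeries.C (R := R0) cv * qq) * star 0 +
      (1 - PowerSeries.C (R := R0) cv * qq) * cE1b +
      (PowerSeries.C (R := R0) cv + PowerSeries.C (R := R0) dv) * qq * hT
  linear_combination hIV1 + (1 - PowerSeries.C (R := R0) cv * qq) * HG 1 -
    PowerSeries.C (R := R0) cv * qq * H0q
/-- The `q`-difference equation (2.10) (cleared of denominators): in `R[[x]]`,
`q(1−x) f(x) = (q + c + a x² q² + d x² q²) f(xq) − (1+xq)(c − a d x² q³) f(xq²)`,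
together with `f(0) = 1` and `f'(0) = (1−q)⁻¹`.  Here `F(xq^j)` is obtained from `F` by the
rescaling `x ↦ q^j x`. -/
theorem statement15 :
    PowerSeries.C (R := R) qq * (1 - PowerSeries.X) * fser =
      (PowerSeries.C (R := R) qq + PowerSeries.C (R := R) (PowerSeries.C (R := R0) cv) +
          PowerSeries.C (R := R) (PowerSeries.C (R := R0) av) * PowerSeries.X ^ 2 * PowerSeries.C (R := R) (qq ^ 2) +
          PowerSeries.C (R := R) (PowerSeries.C (R := R0) dv) * PowerSeries.X ^ 2 * PowerSeries.C (R := R) (qq ^ 2)) *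
        PowerSeries.rescale qq fser -
      (1 + PowerSeries.X * PowerSeries.C (R := R) qq) *
        (PowerSeries.C (R := R) (PowerSeries.C (R := R0) cv) -
            PowerSeries.C (R := R) (PowerSeries.C (R := R0) av) * PowerSeries.C (R := R) (PowerSeries.C (R := R0) dv) *
              PowerSeries.X ^ 2 * PowerSeries.C (R := R) (qq ^ 3)) *
        PowerSeries.rescale (qq ^ 2) fser ∧
    PowerSeries.coeff (R := R) 0 fser = 1 ∧
    PowerSeries.coeff (R := R) 1 fser = Ring.inverse (1 - qq) := by
  classical
  constructor
  · have hR : (PowerSeries.C (R := R) qq + PowerSeries.C (R := R) (PowerSeries.C (R := R0) cv) +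
          PowerSeries.C (R := R) (PowerSeries.C (R := R0) av) * PowerSeries.X ^ 2 * PowerSeries.C (R := R) (qq ^ 2) +
          PowerSeries.C (R := R) (PowerSeries.C (R := R0) dv) * PowerSeries.X ^ 2 * PowerSeries.C (R := R) (qq ^ 2)) *
        PowerSeries.rescale qq fser -
      (1 + PowerSeries.X * PowerSeries.C (R := R) qq) *
        (PowerSeries.C (R := R) (PowerSeries.C (R := R0) cv) -
            PowerSeries.C (R := R) (PowerSeries.C (R := R0) av) * PowerSeries.C (R := R) (PowerSeries.C (R := R0) dv) *
              PowerSeries.X ^ 2 * PowerSeries.C (R := R) (qq ^ 3)) *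
        PowerSeries.rescale (qq ^ 2) fser
      = PowerSeries.C (R := R) qq * PowerSeries.rescale qq fser
        + PowerSeries.C (R := R) (PowerSeries.C (R := R0) cv) * PowerSeries.rescale qq fser
        + PowerSeries.C (R := R) ((PowerSeries.C (R := R0) av + PowerSeries.C (R := R0) dv) * qq ^ 2) *
            (PowerSeries.rescale qq fser * PowerSeries.X ^ 2)
        - PowerSeries.C (R := R) (PowerSeries.C (R := R0) cv) * PowerSeries.rescale (qq ^ 2) fser
        - PowerSeries.C (R := R) (PowerSeries.C (R := R0) cv * qq) *
            (PowerSeries.rescale (qq ^ 2) fser * PowerSeries.X ^ 1)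
        + PowerSeries.C (R := R) (PowerSeries.C (R := R0) av * PowerSeries.C (R := R0) dv * qq ^ 3) *
            (PowerSeries.rescale (qq ^ 2) fser * PowerSeries.X ^ 2)
        + PowerSeries.C (R := R) (PowerSeries.C (R := R0) av * PowerSeries.C (R := R0) dv * qq ^ 4) *
            (PowerSeries.rescale (qq ^ 2) fser * PowerSeries.X ^ 3) := by
      simp only [map_add, map_mul, map_pow]
      ring
    have hL : PowerSeries.C (R := R) qq * (1 - PowerSeries.X) * fser
        = PowerSeries.C (R := R) qq * fser - PowerSeries.C (R := R) qq * (fser * PowerSeries.X ^ 1) := by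
      ring
    rw [hR, hL]
    refine PowerSeries.ext fun m => ?_
    have hco : ∀ (u : R) (F : PowerSeries R) (i : ℕ),
        PowerSeries.coeff (R := R) m (PowerSeries.C (R := R) u * (F * PowerSeries.X ^ i)) =
          if i ≤ m then u * PowerSeries.coeff (R := R) (m - i) F else 0 := by
      intro u F i
      rw [PowerSeries.coeff_C_mul, PowerSeries.coeff_mul_X_pow']
      split <;> simp
    simp only [map_sub, map_add, hco, PowerSeries.coeff_C_mul, PowerSeries.coeff_rescale]
    simp only [fser, PowerSeries.coeff_mk]
    rcases m with _ | _ | _ | _ | j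
    · norm_num
    · norm_num
      linear_combination (qq - PowerSeries.C (R := R0) cv * qq) * H0q
    · norm_num
      linear_combination qq * V1
    · norm_num
      linear_combination qq * V2
    · have e1 : j + 4 - 1 = j + 3 := by omega
      have e2 : j + 4 - 2 = j + 2 := by omega
      have e3 : j + 4 - 3 = j + 1 := by omega
      norm_num [e1, e2, e3]
      linear_combination qq * Vgen j
  constructor
  · simp [fser]
  · simp only [fser, PowerSeries.coeff_mk, one_ne_zero, if_false]
    rw [show (1 : ℕ) - 1 = 0 from rfl, H, cG03, one_mul, pow_one]

end Primc
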